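/- arXiv:1602.06796 — 2 statements merged into one kernel-verified Lean document; each statement's English description precedes it below -/
import Mathlib

section
/- The subgroups of the dihedral group D₁₂ of order 12 (DihedralGroup 6) fall into exactly 10 conjugacy classes: each of the 9 subgroups generated by reflections together with a fixed rotation subgroup splits into a conjugacy class of size 3 with its two conjugates, while every other subgroup is normal; in particular the number of subgroups of D₁₂ up to conjugacy is 10. -/
open Pointwise

namespace D12Aux

open DihedralGroup

abbrev G := DihedralGroup 6

def isSG (f : G → Bool) : Prop :=
  f 1 ∧ (∀ x y, f x → f y → f (x * y)) ∧ (∀ x, f x → f x⁻¹)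

instance : DecidablePred isSG := fun f => by unfold isSG; infer_instance

def toSG (f : G → Bool) (h : isSG f) : Subgroup G where
  carrier := {x | f x}
  one_mem' := h.1
  mul_mem' := fun ha hb => h.2.1 _ _ ha hb
  inv_mem' := fun ha => h.2.2 _ ha

@[simp] lemma mem_toSG {f : G → Bool} {h : isSG f} {x : G} : x ∈ toSG f h ↔ f x := Iff.rfl

abbrev SG := {f : G → Bool // isSG f}

section ClassicalSec
attribute [local instance 0] Classical.propDecidable

noncomputable def e : Subgroup G ≃ SG where
  toFun H := ⟨fun x => decide (x ∈ H), by
    refine ⟨by simp [H.one_mem], fun x y hx hy => ?_, fun x hx => ?_⟩ <;>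
      simp only [decide_eq_true_eq] at *
    · exact H.mul_mem hx hy
    · exact H.inv_mem hx⟩
  invFun f := toSG f.1 f.2
  left_inv H := by ext x; simp
  right_inv f := by ext x; simp

@[simp] lemma e_apply_coe (H : Subgroup G) (x : G) : (e H).1 x = decide (x ∈ H) := rfl

end ClassicalSec

instance : SMul G SG where
  smul g f := ⟨fun x => f.1 (g⁻¹ * x * g), by
    obtain ⟨f, h1, hm, hi⟩ := f
    refine ⟨by simpa using h1, fun x y hx hy => ?_, fun x hx => ?_⟩
    · have := hm _ _ hx hy
      simpa [mul_assoc] using this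
    · have := hi _ hx
      simpa [mul_assoc] using this⟩

@[simp] lemma smul_coe (g : G) (f : SG) (x : G) : (g • f).1 x = f.1 (g⁻¹ * x * g) := rfl

instance : MulAction G SG where
  one_smul f := by ext x; simp
  mul_smul g h f := by ext x; simp [mul_assoc]

lemma econj (g : ConjAct G) (H : Subgroup G) :
    e (g • H) = (ConjAct.ofConjAct g) • e H := by
  ext x
  simp only [e_apply_coe, smul_coe]
  rw [Subgroup.mem_pointwise_smul_iff_inv_smul_mem, ConjAct.smul_def]
  simp only [decide_eq_decide]
  simp [mul_assoc]

lemma orbit_card (H : Subgroup G) :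
    Nat.card (MulAction.orbit (ConjAct G) H) = Nat.card (MulAction.orbit G (e H)) := by
  refine Nat.card_congr (Equiv.trans (e.image _) (Equiv.setCongr ?_))
  ext f
  simp only [Set.mem_image, MulAction.mem_orbit_iff]
  constructor
  · rintro ⟨K, ⟨g, rfl⟩, rfl⟩
    exact ⟨ConjAct.ofConjAct g, (econj g H).symm⟩
  · rintro ⟨g, rfl⟩
    exact ⟨ConjAct.toConjAct g • H, ⟨_, rfl⟩, econj _ H⟩

lemma rel_iff (H K : Subgroup G) :
    (MulAction.orbitRel (ConjAct G) (Subgroup G)).r H K ↔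
      (MulAction.orbitRel G SG).r (e H) (e K) := by
  show H ∈ MulAction.orbit _ K ↔ e H ∈ MulAction.orbit _ (e K)
  simp only [MulAction.mem_orbit_iff]
  constructor
  · rintro ⟨g, rfl⟩
    exact ⟨ConjAct.ofConjAct g, (econj g K).symm⟩
  · rintro ⟨g, hg⟩
    exact ⟨ConjAct.toConjAct g, e.injective (by rw [econj]; exact hg)⟩

def normalB (f : G → Bool) : Prop := ∀ g x, f x → f (g * x * g⁻¹)

instance : DecidablePred normalB := fun f => by unfold normalB; infer_instance

lemma normal_iff (H : Subgroup G) : H.Normal ↔ normalB (e H).1 := by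
  constructor
  · intro h g x hx
    simp only [e_apply_coe, decide_eq_true_eq] at *
    exact h.conj_mem x hx g
  · intro h
    refine ⟨fun x hx g => ?_⟩
    have := h g x (by simpa using hx)
    simpa using this

def kbFun (a b : ZMod 6) : G → Bool
  | DihedralGroup.r i => decide (∃ k : ZMod 6, k * b = i)
  | DihedralGroup.sr i => decide (∃ k : ZMod 6, a + k * b = i)

lemma isSG_kb (a b : ZMod 6) : isSG (kbFun a b) := by
  refine ⟨?_, ?_, ?_⟩
  · show kbFun a b (DihedralGroup.r 0) = true
    simp only [kbFun, decide_eq_true_eq]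
    exact ⟨0, by ring⟩
  · rintro (i | i) (j | j) hx hy <;>
      simp only [kbFun, r_mul_r, r_mul_sr, sr_mul_r, sr_mul_sr, decide_eq_true_eq] at * <;>
      obtain ⟨k₁, hk₁⟩ := hx <;> obtain ⟨k₂, hk₂⟩ := hy
    · exact ⟨k₁ + k₂, by rw [← hk₁, ← hk₂]; ring⟩
    · exact ⟨k₂ - k₁, by rw [← hk₁, ← hk₂]; ring⟩
    · exact ⟨k₁ + k₂, by rw [← hk₁, ← hk₂]; ring⟩
    · exact ⟨k₂ - k₁, by rw [← hk₁, ← hk₂]; ring⟩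
  · rintro (i | i) hx <;>
      simp only [kbFun, decide_eq_true_eq] at *
    · obtain ⟨k, hk⟩ := hx
      show kbFun a b (DihedralGroup.r (-i)) = true
      simp only [kbFun, decide_eq_true_eq]
      exact ⟨-k, by rw [← hk]; ring⟩
    · obtain ⟨k, hk⟩ := hx
      show kbFun a b (DihedralGroup.sr i) = true
      simp only [kbFun, decide_eq_true_eq]
      exact ⟨k, hk⟩

lemma r_pow (b : ZMod 6) (n : ℕ) :
    (DihedralGroup.r b) ^ n = DihedralGroup.r ((n : ZMod 6) * b) := by
  induction n with
  | zero => simp only [pow_zero, Nat.cast_zero, zero_mul, one_def]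
  | succ n ih => rw [pow_succ, ih, r_mul_r]; congr 1; push_cast; ring

lemma toSG_kb (a b : ZMod 6) :
    toSG (kbFun a b) (isSG_kb a b) =
      Subgroup.closure {DihedralGroup.sr a} ⊔ Subgroup.zpowers (DihedralGroup.r b) := by
  apply le_antisymm
  · rintro (i | i) hx <;> simp only [mem_toSG, kbFun, decide_eq_true_eq] at hx <;>
      obtain ⟨k, hk⟩ := hx
    · refine Subgroup.mem_sup_right ?_
      have h2 : DihedralGroup.r i = DihedralGroup.r b ^ (k.val) := by
        rw [r_pow, ← hk, ZMod.natCast_val, ZMod.cast_id]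
      rw [h2]
      exact Subgroup.npow_mem_zpowers _ _
    · have : DihedralGroup.sr i = DihedralGroup.sr a * DihedralGroup.r b ^ (k.val) := by
        rw [r_pow, sr_mul_r, ← hk, ZMod.natCast_val, ZMod.cast_id]
      rw [this]
      exact mul_mem (Subgroup.mem_sup_left (Subgroup.subset_closure rfl))
        (Subgroup.mem_sup_right (Subgroup.npow_mem_zpowers _ _))
  · refine sup_le ?_ ?_
    · rw [Subgroup.closure_le]
      rintro x rfl
      show kbFun a b (DihedralGroup.sr a) = true
      simp only [kbFun, decide_eq_true_eq]
      exact ⟨0, by ring⟩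
    · rw [Subgroup.zpowers_le]
      show kbFun a b (DihedralGroup.r b) = true
      simp only [kbFun, decide_eq_true_eq]
      exact ⟨1, by ring⟩

instance (f : SG) : Fintype (MulAction.orbit G f) := Set.fintypeRange _

instance : Fintype (MulAction.orbitRel.Quotient G SG) :=
  @Quotient.fintype SG _ (MulAction.orbitRel G SG)
    (fun a b => decidable_of_iff (∃ g : G, g • b = a) MulAction.mem_orbit_iff.symm)

set_option maxHeartbeats 8000000 in
set_option maxRecDepth 1000000 in
lemma S1 : ∀ f : SG, ¬ normalB f.1 →
    (∃ a b : ZMod 6, f.1 = kbFun a b) ∧ Fintype.card (MulAction.orbit G f) = 3 := by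
  decide

set_option maxHeartbeats 8000000 in
set_option maxRecDepth 1000000 in
lemma S2 : Fintype.card {f : SG // ¬ normalB f.1} = 9 := by decide

set_option maxHeartbeats 8000000 in
set_option maxRecDepth 1000000 in
lemma S3 : Fintype.card (MulAction.orbitRel.Quotient G SG) = 10 := by decide

end D12Aux

open D12Aux in
/-- The subgroups of `D₁₂ = DihedralGroup 6` fall into exactly 10 conjugacy classes:
every non-normal subgroup is generated by a reflection together with a rotation subgroup
and lies in a conjugacy class (orbit under conjugation) of size 3, there are 9 such
subgroups, and the number of subgroups up to conjugacy is 10. -/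
theorem dihedralGroup_six_subgroups_up_to_conjugacy :
    (∀ H : Subgroup (DihedralGroup 6), ¬ H.Normal →
      ((∃ a b : ZMod 6,
          H = Subgroup.closure {DihedralGroup.sr a} ⊔ Subgroup.zpowers (DihedralGroup.r b)) ∧
        Nat.card (MulAction.orbit (ConjAct (DihedralGroup 6)) H) = 3)) ∧
    Nat.card {H : Subgroup (DihedralGroup 6) // ¬ H.Normal} = 9 ∧
    Nat.card
      (MulAction.orbitRel.Quotient (ConjAct (DihedralGroup 6))
        (Subgroup (DihedralGroup 6))) = 10 := by
  refine ⟨?_, ?_, ?_⟩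
  · intro H hn
    have hn' : ¬ normalB (e H).1 := fun h => hn ((normal_iff H).mpr h)
    obtain ⟨⟨a, b, hab⟩, hcard⟩ := S1 (e H) hn'
    refine ⟨⟨a, b, ?_⟩, ?_⟩
    · have h1 : e H = ⟨kbFun a b, isSG_kb a b⟩ := Subtype.ext hab
      have h2 : H = toSG (kbFun a b) (isSG_kb a b) := by
        have := congrArg e.symm h1
        rwa [e.symm_apply_apply] at this
      rw [h2, toSG_kb]
    · rw [orbit_card H, Nat.card_eq_fintype_card]
      exact hcard
  · have e2 : {H : Subgroup G // ¬ H.Normal} ≃ {f : SG // ¬ normalB f.1} :=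
      e.subtypeEquiv fun H => not_congr (normal_iff H)
    rw [Nat.card_congr e2, Nat.card_eq_fintype_card]
    exact S2
  · have e3 : MulAction.orbitRel.Quotient (ConjAct G) (Subgroup G) ≃
        MulAction.orbitRel.Quotient G SG := Quotient.congr e rel_iff
    rw [Nat.card_congr e3, Nat.card_eq_fintype_card]
    exact S3
end

section
/- Let G = D₁₂ be the dihedral group of order 12 with generators r (of order 6) and f (a reflection), let μ denote the Möbius function of the lattice of subgroups of G, and let ϕ : Subgroup G → ℚ be any function that is constant on conjugacy classes of subgroups (ϕ(H) = ϕ(gHg⁻¹) for all g ∈ G). Then Σ_{H ≤ G} (1/[G:H]) · Σ_{K : H ≤ K ≤ G} μ(H,K) · ϕ(K) = (ϕ(⟨e⟩) + 3ϕ(⟨f⟩) + 3ϕ(⟨fr⟩) + ϕ(⟨r³⟩) + 2ϕ(⟨r²⟩) + 2ϕ(⟨r⟩)) / 12. -/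
open Pointwise Finset
open scoped Classical

noncomputable instance : Fintype (Subgroup (DihedralGroup 6)) := Fintype.ofFinite _

noncomputable instance : LocallyFiniteOrder (Subgroup (DihedralGroup 6)) :=
  Fintype.toLocallyFiniteOrder

lemma conj_zpowers_aux {G : Type*} [Group G] (g a : G) :
    ConjAct.toConjAct g • Subgroup.zpowers a = Subgroup.zpowers (g * a * g⁻¹) := by
  ext x
  simp only [Subgroup.mem_smul_pointwise_iff_exists, Subgroup.mem_zpowers_iff,
    ConjAct.toConjAct_smul]
  constructor
  · rintro ⟨s, ⟨k, rfl⟩, rfl⟩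
    exact ⟨k, by rw [conj_zpow]⟩
  · rintro ⟨k, rfl⟩
    exact ⟨a ^ k, ⟨k, rfl⟩, by rw [conj_zpow]⟩

/-- The equivalence used to enumerate the dihedral group. -/
def dihedralEquiv (n : ℕ) : (ZMod n) ⊕ (ZMod n) ≃ DihedralGroup n where
  toFun i := match i with
    | Sum.inl j => DihedralGroup.r j
    | Sum.inr j => DihedralGroup.sr j
  invFun i := match i with
    | DihedralGroup.r j => Sum.inl j
    | DihedralGroup.sr j => Sum.inr j
  left_inv := by rintro (x | x) <;> rfl
  right_inv := by rintro (x | x) <;> rfl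

/-- Let `G = D₁₂` with generators `r` (of order 6) and `f = sr 0` (a reflection), let `μ` be the
Möbius function of the subgroup lattice of `G`, and let `ϕ : Subgroup G → ℚ` be constant on
conjugacy classes of subgroups.  Then
`Σ_{H ≤ G} (1/[G:H]) Σ_{K ≥ H} μ(H,K) ϕ(K)
  = (ϕ⟨e⟩ + 3ϕ⟨f⟩ + 3ϕ⟨fr⟩ + ϕ⟨r³⟩ + 2ϕ⟨r²⟩ + 2ϕ⟨r⟩)/12`. -/
theorem dihedralGroup_six_moebius_weights
    (ϕ : Subgroup (DihedralGroup 6) → ℚ)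
    (hconj : ∀ (g : ConjAct (DihedralGroup 6)) (H : Subgroup (DihedralGroup 6)),
      ϕ (g • H) = ϕ H) :
    ∑ H : Subgroup (DihedralGroup 6), (H.index : ℚ)⁻¹ *
        ∑ K ∈ Finset.Icc H ⊤, IncidenceAlgebra.mu ℚ H K * ϕ K =
      (ϕ ⊥ + 3 * ϕ (Subgroup.zpowers (DihedralGroup.sr 0))
        + 3 * ϕ (Subgroup.zpowers (DihedralGroup.sr 1))
        + ϕ (Subgroup.zpowers (DihedralGroup.r 3))
        + 2 * ϕ (Subgroup.zpowers (DihedralGroup.r 2))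
        + 2 * ϕ (Subgroup.zpowers (DihedralGroup.r 1))) / 12 := by
  set G := DihedralGroup 6
  -- the number of generators of each (cyclic) subgroup
  set a : Subgroup G → ℚ :=
    fun K => (((Finset.univ : Finset G).filter fun g => Subgroup.zpowers g = K).card : ℚ) with ha
  have hcardG : (Nat.card G) = 12 := by
    rw [Nat.card_eq_fintype_card, DihedralGroup.card]
  -- |H| as a sum of generator-counts of its subgroups
  have hsum : ∀ H : Subgroup G, ((Nat.card H : ℚ)) = ∑ K ∈ Finset.Iic H, a K := by
    intro H
    have hcard : Nat.card H =
        (((Finset.univ : Finset G).filter fun g => g ∈ H).card) := by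
      rw [Nat.card_eq_fintype_card]
      exact Fintype.card_subtype _
    have := Finset.card_eq_sum_card_fiberwise
      (f := fun g : G => Subgroup.zpowers g)
      (s := (Finset.univ : Finset G).filter fun g => g ∈ H)
      (t := Finset.Iic H)
      (by intro g hg
          simp only [Finset.mem_coe, Finset.mem_filter] at hg
          simpa [Finset.mem_coe, Finset.mem_Iic, Subgroup.zpowers_le] using hg.2)
    rw [hcard, this]
    push_cast
    refine Finset.sum_congr rfl fun K hK => ?_
    congr 2
    ext g
    simp only [Finset.mem_filter, Finset.mem_univ, true_and, and_iff_right_iff_imp]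
    rintro rfl
    exact (Finset.mem_Iic.mp hK) (Subgroup.mem_zpowers g)
  -- Möbius inversion: the generator-count is the Möbius transform of the order
  have hmu : ∀ K : Subgroup G,
      a K = ∑ H ∈ Finset.Iic K, IncidenceAlgebra.mu ℚ H K * (Nat.card H : ℚ) :=
    IncidenceAlgebra.moebius_inversion_bot a (fun H => (Nat.card H : ℚ)) hsum
  -- rewrite the index as order/12
  have hindex : ∀ H : Subgroup G, ((H.index : ℚ))⁻¹ = (Nat.card H : ℚ) / 12 := by
    intro H
    have h := H.card_mul_index
    rw [hcardG, Nat.card_eq_fintype_card] at h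
    have hi : (H.index : ℚ) ≠ 0 := by
      exact_mod_cast Subgroup.index_ne_zero_of_finite
    rw [Nat.card_eq_fintype_card]
    field_simp
    exact_mod_cast h.symm.trans (mul_comm _ _)
  calc
    ∑ H : Subgroup G, (H.index : ℚ)⁻¹ * ∑ K ∈ Finset.Icc H ⊤, IncidenceAlgebra.mu ℚ H K * ϕ K
        = ∑ H : Subgroup G, ∑ K ∈ Finset.Ici H,
            (Nat.card H : ℚ) / 12 * (IncidenceAlgebra.mu ℚ H K * ϕ K) := by
        refine Finset.sum_congr rfl fun H _ => ?_
        rw [hindex, Finset.Ici_eq_Icc, Finset.mul_sum]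
    _ = ∑ K : Subgroup G, ∑ H ∈ Finset.Iic K,
            (Nat.card H : ℚ) / 12 * (IncidenceAlgebra.mu ℚ H K * ϕ K) := by
        refine Finset.sum_comm' ?_
        intro H K
        simp [Finset.mem_Ici, Finset.mem_Iic]
    _ = ∑ K : Subgroup G, ϕ K * a K / 12 := by
        refine Finset.sum_congr rfl fun K _ => ?_
        rw [hmu, Finset.mul_sum, Finset.sum_div]
        refine Finset.sum_congr rfl fun H _ => ?_
        ring
    _ = (∑ g : G, ϕ (Subgroup.zpowers g)) / 12 := by
        rw [← Finset.sum_div]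
        congr 1
        rw [← Finset.sum_fiberwise_of_maps_to
          (g := fun g : G => Subgroup.zpowers g)
          (t := (Finset.univ : Finset (Subgroup G)))
          (fun _ _ => Finset.mem_univ _)
          (fun g : G => ϕ (Subgroup.zpowers g))]
        refine Finset.sum_congr rfl fun K _ => ?_
        have hcst : ∀ g ∈ (Finset.univ : Finset G).filter
            (fun g => Subgroup.zpowers g = K),
            ϕ (Subgroup.zpowers g) = ϕ K := by
          intro g hg
          rw [(Finset.mem_filter.mp hg).2]
        rw [Finset.sum_congr rfl hcst, Finset.sum_const, nsmul_eq_mul, ha]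
        ring
    _ = (ϕ ⊥ + 3 * ϕ (Subgroup.zpowers (DihedralGroup.sr 0))
        + 3 * ϕ (Subgroup.zpowers (DihedralGroup.sr 1))
        + ϕ (Subgroup.zpowers (DihedralGroup.r 3))
        + 2 * ϕ (Subgroup.zpowers (DihedralGroup.r 2))
        + 2 * ϕ (Subgroup.zpowers (DihedralGroup.r 1))) / 12 := by
        congr 1
        rw [← Fintype.sum_equiv (dihedralEquiv 6)
          (fun x => ϕ (Subgroup.zpowers (dihedralEquiv 6 x)))
          (fun g => ϕ (Subgroup.zpowers g)) (fun x => rfl)]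
        rw [Fintype.sum_sum_type]
        have e0 : Subgroup.zpowers (DihedralGroup.r 0 : G) = ⊥ := by
          rw [Subgroup.zpowers_eq_bot]; rfl
        have e5 : Subgroup.zpowers (DihedralGroup.r 5 : G) =
            Subgroup.zpowers (DihedralGroup.r 1) := by
          rw [show (DihedralGroup.r 5 : G) = (DihedralGroup.r 1)⁻¹ by decide,
            Subgroup.zpowers_inv]
        have e4 : Subgroup.zpowers (DihedralGroup.r 4 : G) =
            Subgroup.zpowers (DihedralGroup.r 2) := by
          rw [show (DihedralGroup.r 4 : G) = (DihedralGroup.r 2)⁻¹ by decide,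
            Subgroup.zpowers_inv]
        have hc : ∀ k i j : ZMod 6,
            (DihedralGroup.r k : G) * DihedralGroup.sr i * (DihedralGroup.r k)⁻¹
              = DihedralGroup.sr j →
            ϕ (Subgroup.zpowers (DihedralGroup.sr j)) =
              ϕ (Subgroup.zpowers (DihedralGroup.sr i)) := by
          intro k i j h
          rw [← h, ← conj_zpowers_aux, hconj]
        have e2 : ϕ (Subgroup.zpowers (DihedralGroup.sr 2 : G)) =
            ϕ (Subgroup.zpowers (DihedralGroup.sr 0)) := hc 2 0 2 (by decide)
        have e4' : ϕ (Subgroup.zpowers (DihedralGroup.sr 4 : G)) =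
            ϕ (Subgroup.zpowers (DihedralGroup.sr 0)) := hc 1 0 4 (by decide)
        have e3 : ϕ (Subgroup.zpowers (DihedralGroup.sr 3 : G)) =
            ϕ (Subgroup.zpowers (DihedralGroup.sr 1)) := hc 2 1 3 (by decide)
        have e5' : ϕ (Subgroup.zpowers (DihedralGroup.sr 5 : G)) =
            ϕ (Subgroup.zpowers (DihedralGroup.sr 1)) := hc 1 1 5 (by decide)
        show (∑ i : ZMod 6, ϕ (Subgroup.zpowers (DihedralGroup.r i)))
          + (∑ i : ZMod 6, ϕ (Subgroup.zpowers (DihedralGroup.sr i))) = _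
        have hZ : ∀ f : ZMod 6 → ℚ, ∑ i : ZMod 6, f i
            = f 0 + f 1 + f 2 + f 3 + f 4 + f 5 := by
          intro f
          show ∑ i : Fin 6, f i = _
          exact Fin.sum_univ_six f
        rw [hZ, hZ, e0, e5, e4, e2, e4', e3, e5']
        ring
end
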